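/- Let n, p be positive integers with 2p ≤ n. Let Y ∈ ℝ^{n×p} satisfy YᵀY = I_p and let Z ∈ ℝ^{n×p} satisfy ZᵀY = 0. Then there exist an orthonormal family y_1, …, y_{2p} of vectors in ℝⁿ, an orthogonal matrix P ∈ ℝ^{p×p} (PᵀP = I_p), and real numbers θ_1 ≥ θ_2 ≥ … ≥ θ_p ≥ 0 such that YP = [y_1, …, y_p] (the matrix whose columns are y_1, …, y_p) and ZP = [θ_1 y_{p+1}, …, θ_p y_{2p}] (the matrix whose i-th column is θ_i y_{p+i}). -/

import Mathlib

open Matrix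

lemma permQ_orthog {p : ℕ} (σ : Equiv.Perm (Fin p)) :
    (Matrix.of fun i j : Fin p => if i = σ j then (1:ℝ) else 0)ᵀ *
      (Matrix.of fun i j : Fin p => if i = σ j then (1:ℝ) else 0) = 1 := by
  ext i j
  simp [Matrix.mul_apply, Matrix.one_apply, Finset.sum_ite_eq, eq_comm]

lemma permQ_diag {p : ℕ} (σ : Equiv.Perm (Fin p)) (d : Fin p → ℝ) :
    (Matrix.of fun i j : Fin p => if i = σ j then (1:ℝ) else 0)ᵀ * Matrix.diagonal d *
      (Matrix.of fun i j : Fin p => if i = σ j then (1:ℝ) else 0) =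
      Matrix.diagonal (fun i => d (σ i)) := by
  ext i j
  simp [Matrix.mul_apply, Matrix.diagonal_apply, Finset.sum_ite_eq, eq_comm]
  split_ifs with h <;> simp [h]

lemma exists_orthonormal_family {n p : ℕ} (h2p : 2 * p ≤ n)
    (F G : Matrix (Fin n) (Fin p) ℝ) (θ : Fin p → ℝ)
    (hF : ∀ i j : Fin p, (∑ r, F r i * F r j) = if i = j then (1:ℝ) else 0)
    (hG : ∀ i j : Fin p, (∑ r, G r i * G r j) = if i = j then θ i ^ 2 else 0)
    (hGF : ∀ i j : Fin p, (∑ r, G r i * F r j) = 0) :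
    ∃ y : Fin (2 * p) → Fin n → ℝ,
      (∀ i j : Fin (2 * p), y i ⬝ᵥ y j = if i = j then (1 : ℝ) else 0) ∧
      (∀ (i : Fin p) (r : Fin n), F r i = y ⟨i.val, by have := i.isLt; omega⟩ r) ∧
      (∀ (i : Fin p) (r : Fin n), G r i = θ i * y ⟨p + i.val, by have := i.isLt; rw [Nat.two_mul]; exact Nat.add_lt_add_left this p⟩ r) := by
  classical
  set θ' : ℕ → ℝ := fun m => if h : m < p then θ ⟨m, h⟩ else 0 with hθ'
  set w : ℕ → (Fin n → ℝ) := fun m =>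
    if h : m < p then (fun r => F r ⟨m, h⟩)
    else if h2 : m - p < p then (θ' (m - p))⁻¹ • (fun r => G r ⟨m - p, h2⟩)
    else 0 with hw
  set v : Fin n → EuclideanSpace ℝ (Fin n) := fun k =>
    (WithLp.equiv 2 (Fin n → ℝ)).symm (w k.1) with hv
  set s : Set (Fin n) := {k | k.1 < p ∨ (k.1 < 2 * p ∧ θ' (k.1 - p) ≠ 0)} with hs
  have hinner : ∀ x z : Fin n → ℝ,
      (inner ℝ ((WithLp.equiv 2 (Fin n → ℝ)).symm x) ((WithLp.equiv 2 (Fin n → ℝ)).symm z) : ℝ)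
        = ∑ r, x r * z r := by
    intro x z
    simp [PiLp.inner_apply, mul_comm]
  -- pairwise inner products of w
  have hww : ∀ k l : ℕ, (k < p ∨ (k < 2 * p ∧ θ' (k - p) ≠ 0)) →
      (l < p ∨ (l < 2 * p ∧ θ' (l - p) ≠ 0)) →
      (∑ r, w k r * w l r) = if k = l then (1:ℝ) else 0 := by
    intro k l hk hl
    by_cases hkp : k < p <;> by_cases hlp : l < p
    · rw [hw]
      simp only [dif_pos hkp, dif_pos hlp]
      rw [hF ⟨k, hkp⟩ ⟨l, hlp⟩]
      simp [Fin.ext_iff]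
    · have hl2 : l < 2 * p ∧ θ' (l - p) ≠ 0 := hl.resolve_left hlp
      have hlpp : l - p < p := by omega
      rw [hw]
      simp only [dif_pos hkp, dif_neg hlp, dif_pos hlpp, Pi.smul_apply, smul_eq_mul]
      rw [if_neg (by omega)]
      calc ∑ r, F r ⟨k, hkp⟩ * ((θ' (l - p))⁻¹ * G r ⟨l - p, hlpp⟩)
          = (θ' (l - p))⁻¹ * ∑ r, G r ⟨l - p, hlpp⟩ * F r ⟨k, hkp⟩ := by
            rw [Finset.mul_sum]; exact Finset.sum_congr rfl fun r _ => by ring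
        _ = 0 := by rw [hGF]; ring
    · have hk2 : k < 2 * p ∧ θ' (k - p) ≠ 0 := hk.resolve_left hkp
      have hkpp : k - p < p := by omega
      rw [hw]
      simp only [dif_pos hlp, dif_neg hkp, dif_pos hkpp, Pi.smul_apply, smul_eq_mul]
      rw [if_neg (by omega)]
      calc ∑ r, (θ' (k - p))⁻¹ * G r ⟨k - p, hkpp⟩ * F r ⟨l, hlp⟩
          = (θ' (k - p))⁻¹ * ∑ r, G r ⟨k - p, hkpp⟩ * F r ⟨l, hlp⟩ := by
            rw [Finset.mul_sum]; exact Finset.sum_congr rfl fun r _ => by ring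
        _ = 0 := by rw [hGF]; ring
    · have hk2 : k < 2 * p ∧ θ' (k - p) ≠ 0 := hk.resolve_left hkp
      have hl2 : l < 2 * p ∧ θ' (l - p) ≠ 0 := hl.resolve_left hlp
      have hkpp : k - p < p := by omega
      have hlpp : l - p < p := by omega
      rw [hw]
      simp only [dif_neg hkp, dif_neg hlp, dif_pos hkpp, dif_pos hlpp,
        Pi.smul_apply, smul_eq_mul]
      have : ∑ r, (θ' (k - p))⁻¹ * G r ⟨k - p, hkpp⟩ * ((θ' (l - p))⁻¹ * G r ⟨l - p, hlpp⟩)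
          = (θ' (k - p))⁻¹ * (θ' (l - p))⁻¹ *
              ∑ r, G r ⟨k - p, hkpp⟩ * G r ⟨l - p, hlpp⟩ := by
        rw [Finset.mul_sum]; exact Finset.sum_congr rfl fun r _ => by ring
      rw [this, hG]
      have hθk : θ' (k - p) = θ ⟨k - p, hkpp⟩ := by rw [hθ']; simp [hkpp]
      have hθl : θ' (l - p) = θ ⟨l - p, hlpp⟩ := by rw [hθ']; simp [hlpp]
      by_cases hkl : k = l
      · subst hkl
        rw [if_pos rfl, if_pos rfl]
        rw [← hθk]
        field_simp [hk2.2, sq]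
      · rw [if_neg (by simp [Fin.ext_iff]; omega), if_neg hkl, mul_zero]
  have horth : Orthonormal ℝ (s.restrict v) := by
    rw [orthonormal_iff_ite]
    rintro ⟨k, hk⟩ ⟨l, hl⟩
    show inner ℝ (v k) (v l) = _
    rw [hv]
    simp only []
    rw [hinner, hww k.1 l.1 hk hl]
    simp [Fin.ext_iff]
  obtain ⟨b, hb⟩ := horth.exists_orthonormalBasis_extension_of_card_eq
    (by simp)
  refine ⟨fun i => fun r => b ⟨i.1, lt_of_lt_of_le i.isLt h2p⟩ r, ?_, ?_, ?_⟩
  · intro i j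
    have := orthonormal_iff_ite.mp b.orthonormal
      ⟨i.1, lt_of_lt_of_le i.isLt h2p⟩ ⟨j.1, lt_of_lt_of_le j.isLt h2p⟩
    rw [PiLp.inner_apply] at this
    simp only [RCLike.inner_apply, starRingEnd_apply, star_trivial] at this
    calc (fun r => b ⟨i.1, _⟩ r) ⬝ᵥ (fun r => b ⟨j.1, _⟩ r)
        = ∑ r, b ⟨i.1, lt_of_lt_of_le i.isLt h2p⟩ r * b ⟨j.1, lt_of_lt_of_le j.isLt h2p⟩ r := rfl
      _ = if i = j then 1 else 0 := by
          rw [Finset.sum_congr rfl (fun r _ => mul_comm (b ⟨i.1, lt_of_lt_of_le i.isLt h2p⟩ r) _), this]; simp [Fin.ext_iff]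
  · intro i r
    have hin : (i.1 : ℕ) < n := by have := i.isLt; omega
    have hmem : (⟨i.1, hin⟩ : Fin n) ∈ s := Or.inl i.isLt
    have hbv : b ⟨i.1, hin⟩ = v ⟨i.1, hin⟩ := hb _ hmem
    show F r i = b ⟨i.1, hin⟩ r
    rw [hbv]
    show F r i = w i.1 r
    rw [hw]
    simp only [dif_pos i.isLt]
  · intro i r
    by_cases hθi : θ i = 0
    · have h0 : ∑ r, G r i * G r i = 0 := by rw [hG, if_pos rfl, hθi]; ring
      have := (Finset.sum_eq_zero_iff_of_nonneg
        (fun r _ => mul_self_nonneg (G r i))).mp h0 r (Finset.mem_univ r)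
      have hGr : G r i = 0 := by nlinarith [this]
      rw [hGr, hθi, zero_mul]
    · have hlt : p + i.1 < 2 * p := by omega
      have hθ'i : θ' (p + i.1 - p) = θ i := by
        rw [hθ']
        have : p + i.1 - p = i.1 := by omega
        rw [this]
        simp [i.isLt]
      have hin : p + i.1 < n := lt_of_lt_of_le hlt h2p
      have hmem : (⟨p + i.1, hin⟩ : Fin n) ∈ s :=
        Or.inr ⟨hlt, by rw [hθ'i]; exact hθi⟩
      have hbv : b ⟨p + i.1, hin⟩ = v ⟨p + i.1, hin⟩ := hb _ hmem
      show G r i = θ i * b ⟨p + i.1, hin⟩ r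
      rw [hbv]
      show G r i = θ i * w (p + i.1) r
      rw [hw]
      have h1 : ¬ (p + i.1 < p) := by omega
      have h2 : p + i.1 - p < p := by omega
      simp only [dif_neg h1, dif_pos h2, Pi.smul_apply, smul_eq_mul]
      rw [hθ'i]
      have : (⟨p + i.1 - p, h2⟩ : Fin p) = i := by simp [Fin.ext_iff]
      rw [this]
      field_simp


/-- Lemma A.1: intrinsic form of a horizontal lift.
Let `n, p` be positive integers with `2p ≤ n`, `Y ∈ ℝ^{n×p}` with `YᵀY = Iₚ`,
`Z ∈ ℝ^{n×p}` with `ZᵀY = 0`. Then there exist an orthonormal family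
`y₁, …, y_{2p}` in `ℝⁿ`, an orthogonal matrix `P`, and reals
`θ₁ ≥ … ≥ θₚ ≥ 0` such that `YP = [y₁, …, yₚ]` and
`ZP = [θ₁ y_{p+1}, …, θₚ y_{2p}]`. -/
theorem horizontal_lift_intrinsic_form
    (n p : ℕ) (hp : 0 < p) (h2p : 2 * p ≤ n)
    (Y Z : Matrix (Fin n) (Fin p) ℝ)
    (hY : Yᵀ * Y = 1) (hZ : Zᵀ * Y = 0) :
    ∃ (y : Fin (2 * p) → Fin n → ℝ) (P : Matrix (Fin p) (Fin p) ℝ)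
      (θ : Fin p → ℝ),
      (∀ i j : Fin (2 * p), y i ⬝ᵥ y j = if i = j then (1 : ℝ) else 0) ∧
      Pᵀ * P = 1 ∧
      (∀ i j : Fin p, i ≤ j → θ j ≤ θ i) ∧
      (∀ i : Fin p, 0 ≤ θ i) ∧
      (∀ (i : Fin p) (r : Fin n),
        (Y * P) r i = y ⟨i.val, by have := i.isLt; omega⟩ r) ∧
      (∀ (i : Fin p) (r : Fin n),
        (Z * P) r i = θ i * y ⟨p + i.val, by have := i.isLt; omega⟩ r) := by
  classical
  have hApsd : (Zᵀ * Z).PosSemidef := by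
    have := Matrix.posSemidef_conjTranspose_mul_self Z
    rwa [Matrix.conjTranspose_eq_transpose_of_trivial] at this
  have hAh : (Zᵀ * Z).IsHermitian := hApsd.1
  set d : Fin p → ℝ := hAh.eigenvalues with hd
  have hdnn : ∀ i, 0 ≤ d i := fun i => hApsd.eigenvalues_nonneg i
  set σ : Equiv.Perm (Fin p) := (Fin.revPerm).trans (Tuple.sort d) with hσ
  set θ : Fin p → ℝ := fun i => Real.sqrt (d (σ i)) with hθ
  have hθnn : ∀ i, 0 ≤ θ i := fun i => Real.sqrt_nonneg _
  have hθanti : ∀ i j : Fin p, i ≤ j → θ j ≤ θ i := by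
    intro i j hij
    apply Real.sqrt_le_sqrt
    have hrev : Fin.rev j ≤ Fin.rev i := Fin.rev_le_rev.mpr hij
    exact Tuple.monotone_sort d hrev
  have hθsq : ∀ i, θ i ^ 2 = d (σ i) := fun i => Real.sq_sqrt (hdnn _)
  set P₀ : Matrix (Fin p) (Fin p) ℝ := (hAh.eigenvectorUnitary : Matrix (Fin p) (Fin p) ℝ) with hP0
  have hP0unit : P₀ᵀ * P₀ = 1 := by
    have := Matrix.mem_unitaryGroup_iff'.mp hAh.eigenvectorUnitary.2
    rwa [Matrix.star_eq_conjTranspose, Matrix.conjTranspose_eq_transpose_of_trivial] at this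
  have hSpec : P₀ᵀ * (Zᵀ * Z) * P₀ = Matrix.diagonal d := by
    have := hAh.conjStarAlgAut_star_eigenvectorUnitary
    rw [Unitary.conjStarAlgAut_star_apply] at this
    rwa [Matrix.star_eq_conjTranspose, Matrix.conjTranspose_eq_transpose_of_trivial,
      RCLike.ofReal_real_eq_id, Function.id_comp] at this
  set Q : Matrix (Fin p) (Fin p) ℝ :=
    Matrix.of fun i j : Fin p => if i = σ j then (1:ℝ) else 0 with hQ
  set P : Matrix (Fin p) (Fin p) ℝ := P₀ * Q with hP
  have hPP : Pᵀ * P = 1 := by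
    have h1 : Pᵀ * P = Qᵀ * (P₀ᵀ * P₀) * Q := by
      rw [hP]; simp only [Matrix.transpose_mul, Matrix.mul_assoc]
    rw [h1, hP0unit, Matrix.mul_one, hQ, permQ_orthog]
  have hPAP : Pᵀ * (Zᵀ * Z) * P = Matrix.diagonal (fun i => θ i ^ 2) := by
    have h1 : Pᵀ * (Zᵀ * Z) * P = Qᵀ * (P₀ᵀ * (Zᵀ * Z) * P₀) * Q := by
      rw [hP]; simp only [Matrix.transpose_mul, Matrix.mul_assoc]
    rw [h1, hSpec, hQ, permQ_diag]
    have he : (fun i => d (σ i)) = fun i => θ i ^ 2 := funext fun i => (hθsq i).symm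
    rw [he]
  set F : Matrix (Fin n) (Fin p) ℝ := Y * P with hFdef
  set G : Matrix (Fin n) (Fin p) ℝ := Z * P with hGdef
  have hFF : Fᵀ * F = 1 := by
    have h1 : Fᵀ * F = Pᵀ * (Yᵀ * Y) * P := by
      rw [hFdef]; simp only [Matrix.transpose_mul, Matrix.mul_assoc]
    rw [h1, hY, Matrix.mul_one, hPP]
  have hGG : Gᵀ * G = Matrix.diagonal (fun i => θ i ^ 2) := by
    have h1 : Gᵀ * G = Pᵀ * (Zᵀ * Z) * P := by
      rw [hGdef]; simp only [Matrix.transpose_mul, Matrix.mul_assoc]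
    rw [h1, hPAP]
  have hGF : Gᵀ * F = 0 := by
    have h1 : Gᵀ * F = Pᵀ * (Zᵀ * Y) * P := by
      rw [hGdef, hFdef]; simp only [Matrix.transpose_mul, Matrix.mul_assoc]
    rw [h1, hZ, Matrix.mul_zero, Matrix.zero_mul]
  have hFdot : ∀ i j : Fin p, (∑ r, F r i * F r j) = if i = j then (1:ℝ) else 0 := by
    intro i j
    have := congrFun (congrFun hFF i) j
    simpa [Matrix.mul_apply, Matrix.one_apply] using this
  have hGdot : ∀ i j : Fin p, (∑ r, G r i * G r j) = if i = j then θ i ^ 2 else 0 := by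
    intro i j
    have := congrFun (congrFun hGG i) j
    simpa [Matrix.mul_apply, Matrix.diagonal_apply] using this
  have hGFdot : ∀ i j : Fin p, (∑ r, G r i * F r j) = 0 := by
    intro i j
    have := congrFun (congrFun hGF i) j
    simpa [Matrix.mul_apply] using this
  obtain ⟨y, hy1, hy2, hy3⟩ := exists_orthonormal_family h2p F G θ hFdot hGdot hGFdot
  exact ⟨y, P, θ, hy1, hPP, hθanti, hθnn, hy2, hy3⟩
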